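/- Let F be the free group on a,b and f = 3 - a - b ∈ ℤF. Every x ∈ X_f is the image under the homoclinic map φ of some d ∈ {0,1,2,3}^F. Concretely: if v ∈ [0,1)^F is the unique lift of x, then d := v·f* + 𝟙 has all coordinates in {0,1,2,3} and φ(d) = x, where 𝟙 is the constant-one element. -/

import Mathlib

open scoped Classical

set_option maxHeartbeats 1000000

theorem four_cover (a b : FreeGroup Bool) (ha : a = FreeGroup.of true)
    (hb : b = FreeGroup.of false)
    (w : FreeGroup Bool → ℝ) (hw : Summable fun s => |w s|)
    (hw1 : ∀ s, 3 * w s - w (s * a) - w (s * b) = if s = 1 then 1 else 0)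
    (hw2 : ∀ s, 3 * w s - w (a * s) - w (b * s) = if s = 1 then 1 else 0)
    (x : FreeGroup Bool → AddCircle (1 : ℝ))
    (hx : ∀ t, (3 : ℤ) • x t - x (t * a) - x (t * b) = 0)
    (v : FreeGroup Bool → ℝ) (hv : ∀ s, v s ∈ Set.Ico (0 : ℝ) 1)
    (hvx : ∀ s, ((v s : ℝ) : AddCircle (1 : ℝ)) = x s) :
    (∀ t, (3 * v t - v (t * a) - v (t * b) + 1) ∈ ({0, 1, 2, 3} : Set ℝ)) ∧
    (∀ s, ((↑(∑' t, (3 * v t - v (t * a) - v (t * b) + 1) * w (t⁻¹ * s))) :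
        AddCircle (1 : ℝ)) = x s) := by
  have hsumw : Summable w := summable_abs_iff.mp hw
  -- Part 1
  have hmem : ∀ t, (3 * v t - v (t * a) - v (t * b) + 1) ∈ ({0, 1, 2, 3} : Set ℝ) := by
    intro t
    have hcoe : ((3 * v t - v (t * a) - v (t * b) : ℝ) : AddCircle (1 : ℝ)) = 0 := by
      have : ((3 * v t - v (t * a) - v (t * b) : ℝ) : AddCircle (1 : ℝ))
          = (3 : ℤ) • x t - x (t * a) - x (t * b) := by
        rw [show (3:ℝ) * v t - v (t*a) - v (t*b)
            = (3:ℤ) • v t - v (t*a) - v (t*b) by rw [zsmul_eq_mul]; push_cast; ring]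
        rw [AddCircle.coe_sub, AddCircle.coe_sub, AddCircle.coe_zsmul, hvx, hvx, hvx]
      rw [this, hx]
    rw [AddCircle.coe_eq_zero_iff] at hcoe
    obtain ⟨k, hk⟩ := hcoe
    have hk' : 3 * v t - v (t * a) - v (t * b) = (k : ℝ) := by simpa using hk.symm
    obtain ⟨h0t, h1t⟩ := hv t
    obtain ⟨h0a, h1a⟩ := hv (t * a)
    obtain ⟨h0b, h1b⟩ := hv (t * b)
    have hlb : (-2 : ℝ) < (k : ℝ) := by rw [← hk']; nlinarith
    have hub : (k : ℝ) < 3 := by rw [← hk']; nlinarith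
    have hlb' : (-2 : ℤ) < k := by exact_mod_cast hlb
    have hub' : k < 3 := by exact_mod_cast hub
    rw [hk']
    interval_cases k <;> norm_num
  refine ⟨hmem, ?_⟩
  intro s
  -- key summability facts
  have key : ∀ c : FreeGroup Bool, Summable (fun t : FreeGroup Bool => |w (t * c)|) := by
    intro c
    exact ((Equiv.mulRight c).summable_iff).mpr hw
  have hws : Summable (fun t : FreeGroup Bool => |w (t⁻¹ * s)|) := by
    have := ((Equiv.inv (FreeGroup Bool)).summable_iff (f := fun t : FreeGroup Bool => |w (t * s)|)).mpr (key s)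
    exact this
  have bnd : ∀ (u : FreeGroup Bool → ℝ), (∀ r, |u r| ≤ 1) →
      Summable (fun t : FreeGroup Bool => u t * w (t⁻¹ * s)) := by
    intro u hu
    apply Summable.of_abs
    apply Summable.of_nonneg_of_le (fun t => abs_nonneg _) _ hws
    intro t
    rw [abs_mul]
    calc |u t| * |w (t⁻¹ * s)| ≤ 1 * |w (t⁻¹ * s)| :=
          mul_le_mul_of_nonneg_right (hu t) (abs_nonneg _)
      _ = |w (t⁻¹ * s)| := one_mul _
  have hvb : ∀ r : FreeGroup Bool, |v r| ≤ 1 := by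
    intro r; obtain ⟨h0, h1⟩ := hv r
    rw [abs_of_nonneg h0]; linarith
  have hsum0 : Summable (fun t : FreeGroup Bool => v t * w (t⁻¹ * s)) := bnd _ hvb
  have hsum1 : Summable (fun t : FreeGroup Bool => v (t * a) * w (t⁻¹ * s)) := bnd _ (fun r => hvb _)
  have hsum2 : Summable (fun t : FreeGroup Bool => v (t * b) * w (t⁻¹ * s)) := bnd _ (fun r => hvb _)
  have hsumws : Summable (fun t : FreeGroup Bool => w (t⁻¹ * s)) := hws.of_abs
  -- total mass of w is 1
  have hW : ∑' u : FreeGroup Bool, w u = 1 := by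
    have hWa : ∑' t : FreeGroup Bool, w (t * a) = ∑' u : FreeGroup Bool, w u := (Equiv.mulRight a).tsum_eq w
    have hWb : ∑' t : FreeGroup Bool, w (t * b) = ∑' u : FreeGroup Bool, w u := (Equiv.mulRight b).tsum_eq w
    have hsa : Summable (fun t : FreeGroup Bool => w (t * a)) := ((Equiv.mulRight a).summable_iff).mpr hsumw
    have hsb : Summable (fun t : FreeGroup Bool => w (t * b)) := ((Equiv.mulRight b).summable_iff).mpr hsumw
    have h3 : Summable (fun t : FreeGroup Bool => 3 * w t) := hsumw.mul_left 3
    have h1 : ∑' t : FreeGroup Bool, (3 * w t - w (t * a) - w (t * b))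
        = 3 * (∑' u : FreeGroup Bool, w u) - (∑' u : FreeGroup Bool, w u) - (∑' u : FreeGroup Bool, w u) := by
      rw [Summable.tsum_sub (h3.sub hsa) hsb, Summable.tsum_sub h3 hsa, tsum_mul_left, hWa, hWb]
    have h2 : ∑' t : FreeGroup Bool, (3 * w t - w (t * a) - w (t * b)) = 1 := by
      have : ∀ t : FreeGroup Bool, (3 * w t - w (t * a) - w (t * b)) = if t = 1 then (1:ℝ) else 0 := hw1
      rw [tsum_congr this, tsum_ite_eq]
    linarith [h1.symm.trans h2]
  -- reindexing lemmas
  have hre1 : ∑' t : FreeGroup Bool, v (t * a) * w (t⁻¹ * s)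
      = ∑' u : FreeGroup Bool, v u * w (a * (u⁻¹ * s)) := by
    rw [← ((Equiv.mulRight a⁻¹).tsum_eq (fun t : FreeGroup Bool => v (t * a) * w (t⁻¹ * s)))]
    apply tsum_congr
    intro u
    show v (u * a⁻¹ * a) * w ((u * a⁻¹)⁻¹ * s) = v u * w (a * (u⁻¹ * s))
    rw [inv_mul_cancel_right, mul_inv_rev, inv_inv, mul_assoc]
  have hre2 : ∑' t : FreeGroup Bool, v (t * b) * w (t⁻¹ * s)
      = ∑' u : FreeGroup Bool, v u * w (b * (u⁻¹ * s)) := by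
    rw [← ((Equiv.mulRight b⁻¹).tsum_eq (fun t : FreeGroup Bool => v (t * b) * w (t⁻¹ * s)))]
    apply tsum_congr
    intro u
    show v (u * b⁻¹ * b) * w ((u * b⁻¹)⁻¹ * s) = v u * w (b * (u⁻¹ * s))
    rw [inv_mul_cancel_right, mul_inv_rev, inv_inv, mul_assoc]
  have hreW : ∑' t : FreeGroup Bool, w (t⁻¹ * s) = ∑' u : FreeGroup Bool, w u := by
    have := ((Equiv.inv (FreeGroup Bool)).trans (Equiv.mulRight s)).tsum_eq w
    simpa using this
  -- summability of the reindexed pieces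
  have hsum1' : Summable (fun u : FreeGroup Bool => v u * w (a * (u⁻¹ * s))) := by
    have := ((Equiv.mulRight a⁻¹).summable_iff
        (f := fun t : FreeGroup Bool => v (t * a) * w (t⁻¹ * s))).mpr hsum1
    refine this.congr ?_
    intro u
    show v (u * a⁻¹ * a) * w ((u * a⁻¹)⁻¹ * s) = v u * w (a * (u⁻¹ * s))
    rw [inv_mul_cancel_right, mul_inv_rev, inv_inv, mul_assoc]
  have hsum2' : Summable (fun u : FreeGroup Bool => v u * w (b * (u⁻¹ * s))) := by
    have := ((Equiv.mulRight b⁻¹).summable_iff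
        (f := fun t : FreeGroup Bool => v (t * b) * w (t⁻¹ * s))).mpr hsum2
    refine this.congr ?_
    intro u
    show v (u * b⁻¹ * b) * w ((u * b⁻¹)⁻¹ * s) = v u * w (b * (u⁻¹ * s))
    rw [inv_mul_cancel_right, mul_inv_rev, inv_inv, mul_assoc]
  -- the main computation
  have hsplit : ∑' t : FreeGroup Bool, (3 * v t - v (t * a) - v (t * b) + 1) * w (t⁻¹ * s)
      = 3 * (∑' t : FreeGroup Bool, v t * w (t⁻¹ * s)) - (∑' t : FreeGroup Bool, v (t * a) * w (t⁻¹ * s))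
        - (∑' t : FreeGroup Bool, v (t * b) * w (t⁻¹ * s)) + (∑' t : FreeGroup Bool, w (t⁻¹ * s)) := by
    have h3 : Summable (fun t : FreeGroup Bool => 3 * (v t * w (t⁻¹ * s))) := hsum0.mul_left 3
    have hpt : ∀ t : FreeGroup Bool, (3 * v t - v (t * a) - v (t * b) + 1) * w (t⁻¹ * s)
        = 3 * (v t * w (t⁻¹ * s)) - v (t * a) * w (t⁻¹ * s)
            - v (t * b) * w (t⁻¹ * s) + w (t⁻¹ * s) := fun t => by ring
    rw [tsum_congr hpt, Summable.tsum_add ((h3.sub hsum1).sub hsum2) hsumws,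
      Summable.tsum_sub (h3.sub hsum1) hsum2, Summable.tsum_sub h3 hsum1, tsum_mul_left]
  have hcollect : 3 * (∑' t : FreeGroup Bool, v t * w (t⁻¹ * s)) - (∑' t : FreeGroup Bool, v (t * a) * w (t⁻¹ * s))
      - (∑' t : FreeGroup Bool, v (t * b) * w (t⁻¹ * s)) = v s := by
    rw [hre1, hre2]
    have h3 : Summable (fun t : FreeGroup Bool => 3 * (v t * w (t⁻¹ * s))) := hsum0.mul_left 3
    have hcomb : 3 * (∑' t : FreeGroup Bool, v t * w (t⁻¹ * s)) - (∑' u : FreeGroup Bool, v u * w (a * (u⁻¹ * s)))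
        - (∑' u : FreeGroup Bool, v u * w (b * (u⁻¹ * s)))
        = ∑' u : FreeGroup Bool, (3 * (v u * w (u⁻¹ * s)) - v u * w (a * (u⁻¹ * s))
            - v u * w (b * (u⁻¹ * s))) := by
      rw [Summable.tsum_sub (h3.sub hsum1') hsum2', Summable.tsum_sub h3 hsum1', tsum_mul_left]
    rw [hcomb]
    have : ∀ u : FreeGroup Bool, (3 * (v u * w (u⁻¹ * s)) - v u * w (a * (u⁻¹ * s))
        - v u * w (b * (u⁻¹ * s))) = if u = s then v s else 0 := by
      intro u
      have h2 := hw2 (u⁻¹ * s)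
      by_cases h : u = s
      · subst h
        rw [if_pos rfl]
        rw [if_pos (by simp)] at h2
        linear_combination v u * h2
      · rw [if_neg h]
        rw [if_neg (by simpa [inv_mul_eq_one] using h)] at h2
        linear_combination v u * h2
    rw [tsum_congr this, tsum_ite_eq]
  rw [hsplit, hcollect, hreW, hW]
  rw [AddCircle.coe_add, hvx s, show ((1:ℝ) : AddCircle (1:ℝ)) = 0 from
    AddCircle.coe_period (p := (1:ℝ)), add_zero]
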